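/- Let B be an N×N column stochastic real matrix and let p ∈ (0,1). Then the matrix I + p·B + (1−p)·B² is invertible, and the unique row vector z ∈ ℝ^N satisfying z·(I + p·B + (1−p)·B²) = 𝟏 is z = (1/2)·𝟏. -/

import Mathlib

open Matrix

/-- If the rows of `|A|` sum to at most 1 and `|c| < 1`, then `1 - c • A` is invertible. -/
lemma aux_unit {N : ℕ} (A : Matrix (Fin N) (Fin N) ℂ)
    (h : ∀ i, ∑ j, ‖A i j‖ ≤ 1) (c : ℂ) (hc : ‖c‖ < 1) :
    IsUnit ((1 : Matrix (Fin N) (Fin N) ℂ) - c • A) := by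
  rw [Matrix.isUnit_iff_isUnit_det, isUnit_iff_ne_zero]
  intro hdet
  obtain ⟨x, hx, hx0⟩ := Matrix.exists_mulVec_eq_zero_iff.mpr hdet
  have hxeq : ∀ i, x i = c * (A.mulVec x) i := by
    intro i
    have := congrFun hx0 i
    simp [Matrix.sub_mulVec, Matrix.smul_mulVec, sub_eq_zero] at this
    simpa using this
  obtain ⟨i, -, hi⟩ := Finset.exists_max_image Finset.univ (fun i => ‖x i‖)
    (by
      obtain ⟨j, hj⟩ := Function.ne_iff.mp hx
      exact ⟨j, Finset.mem_univ j⟩)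
  have hipos : 0 < ‖x i‖ := by
    obtain ⟨j, hj⟩ := Function.ne_iff.mp hx
    have := hi j (Finset.mem_univ j)
    have : 0 < ‖x j‖ := by simpa using hj
    linarith [hi j (Finset.mem_univ j)]
  have hbound : ‖x i‖ ≤ ‖c‖ * ‖x i‖ := by
    calc ‖x i‖ = ‖c‖ * ‖(A.mulVec x) i‖ := by
          rw [hxeq i, norm_mul]
      _ ≤ ‖c‖ * ∑ j, ‖A i j‖ * ‖x j‖ := by
          apply mul_le_mul_of_nonneg_left _ (norm_nonneg c)
          rw [Matrix.mulVec, dotProduct]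
          refine le_trans (norm_sum_le _ _) ?_
          simp [norm_mul]
      _ ≤ ‖c‖ * ∑ j, ‖A i j‖ * ‖x i‖ := by
          apply mul_le_mul_of_nonneg_left _ (norm_nonneg c)
          apply Finset.sum_le_sum
          intro j _
          exact mul_le_mul_of_nonneg_left (hi j (Finset.mem_univ j)) (norm_nonneg _)
      _ = ‖c‖ * ((∑ j, ‖A i j‖) * ‖x i‖) := by
          rw [← Finset.sum_mul]
      _ ≤ ‖c‖ * (1 * ‖x i‖) := by
          apply mul_le_mul_of_nonneg_left _ (norm_nonneg c)
          exact mul_le_mul_of_nonneg_right (h i) hipos.le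
      _ = ‖c‖ * ‖x i‖ := by ring
  nlinarith

lemma aux_bnd (p : ℝ) (hp0 : 0 < p) (hp1 : p < 1) (s : ℂ)
    (hs : s ^ 2 = ((p ^ 2 - 4 * (1 - p) : ℝ) : ℂ)) :
    ‖(-(p : ℂ) + s) / 2‖ < 1 := by
  set d : ℝ := p ^ 2 - 4 * (1 - p) with hd
  rcases le_or_gt 0 d with hd0 | hd0
  · have habs : ‖s‖ ^ 2 = d := by
      rw [← norm_pow, hs, Complex.norm_real, Real.norm_eq_abs, abs_of_nonneg hd0]
    have hslt : ‖s‖ < p := by nlinarith [norm_nonneg s]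
    have h1 : ‖(-(p : ℂ) + s) / 2‖ ≤ (‖-(p : ℂ)‖ + ‖s‖) / 2 := by
      rw [norm_div, Complex.norm_two]
      gcongr
      exact norm_add_le _ _
    have h2 : ‖-(p : ℂ)‖ = p := by
      rw [norm_neg, Complex.norm_real, Real.norm_eq_abs, abs_of_pos hp0]
    linarith [h1, h2.le]
  · have h1 := congrArg Complex.im hs
    have h2 := congrArg Complex.re hs
    simp [pow_two, Complex.mul_im, Complex.mul_re] at h1 h2
    have hre : s.re = 0 := by
      rcases mul_eq_zero.mp (by linarith : s.re * s.im = 0) with h | h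
      · exact h
      · exfalso; rw [h] at h2; nlinarith [sq_nonneg s.re]
    have key : ‖(-(p : ℂ) + s) / 2‖ ^ 2 = 1 - p := by
      rw [Complex.sq_norm, Complex.normSq_apply]
      simp only [Complex.div_re, Complex.div_im, Complex.add_re, Complex.add_im,
        Complex.neg_re, Complex.neg_im, Complex.ofReal_re, Complex.ofReal_im, hre,
        Complex.re_ofNat, Complex.im_ofNat, Complex.normSq_ofNat]
      have him : s.im * s.im = -d := by nlinarith
      field_simp
      nlinarith [him]
    nlinarith [norm_nonneg ((-(p : ℂ) + s) / 2)]

lemma aux_roots (p : ℝ) (hp0 : 0 < p) (hp1 : p < 1) :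
    ∃ a b : ℂ, a + b = -(p : ℂ) ∧ a * b = ((1 - p : ℝ) : ℂ) ∧
      ‖a‖ < 1 ∧ ‖b‖ < 1 := by
  obtain ⟨s, hs⟩ := IsAlgClosed.exists_pow_nat_eq (k := ℂ)
    (((p ^ 2 - 4 * (1 - p) : ℝ)) : ℂ) two_pos
  refine ⟨(-(p : ℂ) + s) / 2, (-(p : ℂ) - s) / 2, by ring, ?_, ?_, ?_⟩
  · have heq : ((-(p : ℂ) + s) / 2) * ((-(p : ℂ) - s) / 2) = ((p:ℂ)^2 - s^2) / 4 := by ring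
    rw [heq, hs]
    push_cast
    ring
  · exact aux_bnd p hp0 hp1 s hs
  · have : (-(p : ℂ) - s) / 2 = (-(p : ℂ) + (-s)) / 2 := by ring
    rw [this]
    exact aux_bnd p hp0 hp1 (-s) (by rw [neg_pow, hs]; ring)

/-- For a column stochastic matrix `B` and `p ∈ (0,1)`, the matrix `I + p·B + (1−p)·B²` is
invertible, and the unique row vector `z` with `z·(I + p·B + (1−p)·B²) = 𝟏` is `z = (1/2)𝟏`. -/
theorem stmt_7 (N : ℕ) (B : Matrix (Fin N) (Fin N) ℝ)
    (hnn : ∀ i j, 0 ≤ B i j) (hcol : ∀ j, ∑ i, B i j = 1)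
    (p : ℝ) (hp0 : 0 < p) (hp1 : p < 1) :
    IsUnit ((1 : Matrix (Fin N) (Fin N) ℝ) + p • B + (1 - p) • B ^ 2) ∧
    ∀ z : Fin N → ℝ,
      z ᵥ* ((1 : Matrix (Fin N) (Fin N) ℝ) + p • B + (1 - p) • B ^ 2) = (fun _ => 1) ↔
        z = fun _ => 1 / 2 := by
  set M := (1 : Matrix (Fin N) (Fin N) ℝ) + p • B + (1 - p) • B ^ 2 with hM
  -- column sums of B² are 1
  have hsq : ∀ j, ∑ i, (B * B) i j = 1 := by
    intro j
    simp only [Matrix.mul_apply]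
    calc ∑ i, ∑ k, B i k * B k j = ∑ k, ∑ i, B i k * B k j := Finset.sum_comm
      _ = ∑ k, (∑ i, B i k) * B k j := by simp [Finset.sum_mul]
      _ = ∑ k, B k j := by simp [hcol]
      _ = 1 := hcol j
  -- invertibility
  have hunit : IsUnit M := by
    set Bc := B.map (Complex.ofReal) with hBc
    set A := Bcᵀ with hA'
    have hA : ∀ i, ∑ j, ‖A i j‖ ≤ 1 := by
      intro i
      have he : ∀ j, ‖A i j‖ = B j i := by
        intro j
        simp [hA', hBc, Matrix.transpose_apply, Matrix.map_apply, Complex.norm_real,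
          abs_of_nonneg (hnn j i)]
      rw [Finset.sum_congr rfl (fun j _ => he j), hcol i]
    obtain ⟨a, b, hsum, hprod, ha, hb⟩ := aux_roots p hp0 hp1
    have hfac : ((1 : Matrix (Fin N) (Fin N) ℂ) - a • A) * (1 - b • A)
        = 1 + (p : ℂ) • A + ((1 - p : ℝ) : ℂ) • (A * A) := by
      have h1 : ((p : ℂ)) = -(a + b) := by rw [hsum]; ring
      rw [h1, ← hprod]
      simp only [mul_sub, sub_mul, one_mul, mul_one, Matrix.smul_mul, Matrix.mul_smul,
        smul_smul]
      module
    have hAunit : IsUnit ((1 : Matrix (Fin N) (Fin N) ℂ) + (p : ℂ) • A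
        + ((1 - p : ℝ) : ℂ) • (A * A)) := by
      rw [← hfac]
      exact (aux_unit A hA a ha).mul (aux_unit A hA b hb)
    -- relate to transpose of the complex matrix
    have htrans : ((1 : Matrix (Fin N) (Fin N) ℂ) + (p : ℂ) • Bc + ((1 - p : ℝ) : ℂ) • Bc ^ 2)ᵀ
        = 1 + (p : ℂ) • A + ((1 - p : ℝ) : ℂ) • (A * A) := by
      rw [Matrix.transpose_add, Matrix.transpose_add, Matrix.transpose_one,
        Matrix.transpose_smul, Matrix.transpose_smul, pow_two, Matrix.transpose_mul, hA']
    have hMcunit : IsUnit ((1 : Matrix (Fin N) (Fin N) ℂ) + (p : ℂ) • Bc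
        + ((1 - p : ℝ) : ℂ) • Bc ^ 2) := by
      rw [Matrix.isUnit_iff_isUnit_det, ← Matrix.det_transpose, htrans,
        ← Matrix.isUnit_iff_isUnit_det]
      exact hAunit
    have hmap : M.map Complex.ofRealHom
        = 1 + (p : ℂ) • Bc + ((1 - p : ℝ) : ℂ) • Bc ^ 2 := by
      ext i j
      simp only [hM, Matrix.map_apply, Matrix.add_apply, Matrix.smul_apply, smul_eq_mul,
        Matrix.one_apply, pow_two, Matrix.mul_apply, hBc, Complex.ofRealHom_eq_coe]
      push_cast
      simp [apply_ite (Complex.ofReal)]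
    rw [Matrix.isUnit_iff_isUnit_det, isUnit_iff_ne_zero]
    intro hdet
    have : ((1 : Matrix (Fin N) (Fin N) ℂ) + (p : ℂ) • Bc
        + ((1 - p : ℝ) : ℂ) • Bc ^ 2).det = 0 := by
      have hdet2 := Complex.ofRealHom.map_det M
      rw [hdet, map_zero, RingHom.mapMatrix_apply, hmap] at hdet2
      exact hdet2.symm
    rw [Matrix.isUnit_iff_isUnit_det, isUnit_iff_ne_zero] at hMcunit
    exact hMcunit this
  -- the half vector works
  have hw : (fun _ => (1 / 2 : ℝ)) ᵥ* M = fun _ => 1 := by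
    funext j
    show ∑ i, (1 / 2 : ℝ) * M i j = 1
    rw [← Finset.mul_sum]
    have h1 : ∑ i, M i j = 2 := by
      simp only [hM, Matrix.add_apply, Matrix.smul_apply, smul_eq_mul, pow_two]
      rw [Finset.sum_add_distrib, Finset.sum_add_distrib, ← Finset.mul_sum, ← Finset.mul_sum,
        hcol j, hsq j]
      have : ∑ i, (1 : Matrix (Fin N) (Fin N) ℝ) i j = 1 := by
        simp [Matrix.one_apply]
      rw [this]; ring
    rw [h1]; norm_num
  refine ⟨hunit, fun z => ⟨fun hz => ?_, fun hz => ?_⟩⟩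
  · obtain ⟨u, hu⟩ := hunit
    have h1 : z ᵥ* M ᵥ* (↑u⁻¹ : Matrix (Fin N) (Fin N) ℝ)
        = (fun _ => (1 / 2 : ℝ)) ᵥ* M ᵥ* ↑u⁻¹ := by rw [hz, hw]
    rwa [Matrix.vecMul_vecMul, Matrix.vecMul_vecMul, ← hu, Units.mul_inv,
      Matrix.vecMul_one, Matrix.vecMul_one] at h1
  · rw [hz]; exact hw
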